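/- arXiv:2604.06936 — 2 statements merged into one kernel-verified Lean document; each statement's English description precedes it below -/
import Mathlib

section
/- Under the stochastic optimal control setup with weight function w, let 𝔓(P̂,r̂) and 𝔓(P̃,r̃) be nonempty box ambiguity sets with robust Bellman fixed points V̂* and Ṽ*, and fix s̄ ∈ S. Suppose the second-order growth condition holds at Â*(s̄): there is ν > 0 such that sup_{Q∈𝔓(P̂,r̂)} E_Q[C(s̄,a,ξ) + γ V̂*(g(s̄,a,ξ))] ≥ V̂*(s̄) + ν · d_E(a, Â*(s̄))^2 for all a ∈ A, where Â*(s̄) := argmin_{a∈A} sup_{Q∈𝔓(P̂,r̂)} E_Q[C(s̄,a,ξ) + γ V̂*(g(s̄,a,ξ))]. Then, with Ã*(s̄) the corresponding optimal action set for (P̃,r̃), D(Ã*(s̄), Â*(s̄); d_E) ≤ sqrt( (3 C̄_w w(s̄) / (ν (1 − γ_w)^2)) · H(𝔓(P̂,r̂), 𝔓(P̃,r̃); d_TV) ). -/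
open Filter Topology

noncomputable section

/-- Box-type ambiguity set `𝔓(P,r) = {Q ∈ Δ_J : P_j - r_j ≤ Q_j ≤ P_j + r_j ∀ j}`. -/
def boxSet (J : ℕ) (P r : Fin J → ℝ) : Set (Fin J → ℝ) :=
  {Q | Q ∈ stdSimplex ℝ (Fin J) ∧ ∀ j, P j - r j ≤ Q j ∧ Q j ≤ P j + r j}

/-- Expectation of `h` under the probability vector `Q`. -/
def expec {J : ℕ} (Q h : Fin J → ℝ) : ℝ := ∑ j, Q j * h j

/-- Weighted sup norm `‖V‖_w = sup_{s ∈ S} |V s| / w s`. -/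
noncomputable def wSupNorm {m : ℕ} (S : Set (Fin m → ℝ)) (w V : (Fin m → ℝ) → ℝ) : ℝ :=
  ⨆ s : S, |V (s : Fin m → ℝ)| / w (s : Fin m → ℝ)

/-- Distributionally robust Bellman operator. -/
noncomputable def robustBellman {J m n : ℕ} (A : Set (Fin n → ℝ)) (amb : Set (Fin J → ℝ))
    (C : (Fin m → ℝ) → (Fin n → ℝ) → Fin J → ℝ)
    (g : (Fin m → ℝ) → (Fin n → ℝ) → Fin J → Fin m → ℝ)
    (γ : ℝ) (V : (Fin m → ℝ) → ℝ) (s : Fin m → ℝ) : ℝ :=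
  ⨅ a : A, ⨆ Q : amb,
    expec (Q : Fin J → ℝ) (fun j => C s (a : Fin n → ℝ) j + γ * V (g s (a : Fin n → ℝ) j))

/-- True Bellman operator under the distribution `Pc`. -/
noncomputable def trueBellman {J m n : ℕ} (A : Set (Fin n → ℝ)) (Pc : Fin J → ℝ)
    (C : (Fin m → ℝ) → (Fin n → ℝ) → Fin J → ℝ)
    (g : (Fin m → ℝ) → (Fin n → ℝ) → Fin J → Fin m → ℝ)
    (γ : ℝ) (V : (Fin m → ℝ) → ℝ) (s : Fin m → ℝ) : ℝ :=
  ⨅ a : A, expec Pc (fun j => C s (a : Fin n → ℝ) j + γ * V (g s (a : Fin n → ℝ) j))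

/-- Policy-evaluation Bellman operator under the distribution `Pc`. -/
noncomputable def policyBellman {J m n : ℕ} (Pc : Fin J → ℝ)
    (C : (Fin m → ℝ) → (Fin n → ℝ) → Fin J → ℝ)
    (g : (Fin m → ℝ) → (Fin n → ℝ) → Fin J → Fin m → ℝ)
    (π : (Fin m → ℝ) → (Fin n → ℝ))
    (γ : ℝ) (V : (Fin m → ℝ) → ℝ) (s : Fin m → ℝ) : ℝ :=
  expec Pc (fun j => C s (π s) j + γ * V (g s (π s) j))

/-- Pseudometric with ζ-structure: `d_G(P,Q) = sup_{g ∈ G} |E_P[g] - E_Q[g]|`. -/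
noncomputable def dzeta {J : ℕ} (G : Set (Fin J → ℝ)) (P Q : Fin J → ℝ) : ℝ :=
  ⨆ g : G, |expec P (g : Fin J → ℝ) - expec Q (g : Fin J → ℝ)|

/-- Total variation distance on probability vectors. -/
noncomputable def dTV {J : ℕ} (P Q : Fin J → ℝ) : ℝ := ∑ j, |P j - Q j|

/-- Excess (deviation) of `A` over `B` with respect to a (pseudo)metric `d`. -/
noncomputable def excessD {α : Type*} (d : α → α → ℝ) (A B : Set α) : ℝ :=
  ⨆ x : A, ⨅ y : B, d (x : α) (y : α)

/-- Hausdorff distance with respect to a (pseudo)metric `d`. -/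
noncomputable def hausD {α : Type*} (d : α → α → ℝ) (A B : Set α) : ℝ :=
  max (excessD d A B) (excessD d B A)

/-- Euclidean distance on `ℝ^d`. -/
noncomputable def eDist {d : ℕ} (x y : Fin d → ℝ) : ℝ :=
  Real.sqrt (∑ i, (x i - y i) ^ 2)

/-- Euclidean distance from a point to a set. -/
def eDistSet {d : ℕ} (x : Fin d → ℝ) (B : Set (Fin d → ℝ)) : ℝ :=
  ⨅ b : B, eDist x (b : Fin d → ℝ)

-- helpers

lemma aux_abs_expec_le {J : ℕ} {Q h : Fin J → ℝ} (hQ : Q ∈ stdSimplex ℝ (Fin J))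
    {B : ℝ} (hB : ∀ j, |h j| ≤ B) : |expec Q h| ≤ B := by
  have h1 : |expec Q h| ≤ ∑ j, Q j * |h j| := by
    refine (Finset.abs_sum_le_sum_abs _ _).trans ?_
    refine Finset.sum_le_sum fun j _ => ?_
    rw [abs_mul, abs_of_nonneg (hQ.1 j)]
  refine h1.trans ?_
  calc ∑ j, Q j * |h j| ≤ ∑ j, Q j * B :=
        Finset.sum_le_sum fun j _ => mul_le_mul_of_nonneg_left (hB j) (hQ.1 j)
    _ = B := by rw [← Finset.sum_mul, hQ.2, one_mul]

lemma aux_abs_expec_sub_le {J : ℕ} {P Q h : Fin J → ℝ} {B : ℝ}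
    (hB : ∀ j, |h j| ≤ B) : |expec P h - expec Q h| ≤ B * dTV P Q := by
  have heq : expec P h - expec Q h = ∑ j, (P j - Q j) * h j := by
    simp only [expec, ← Finset.sum_sub_distrib]
    exact Finset.sum_congr rfl fun j _ => by ring
  rw [heq]
  refine (Finset.abs_sum_le_sum_abs _ _).trans ?_
  have : ∀ j ∈ Finset.univ, |(P j - Q j) * h j| ≤ B * |P j - Q j| := by
    intro j _
    rw [abs_mul, mul_comm]
    exact mul_le_mul_of_nonneg_right (hB j) (abs_nonneg _)
  refine (Finset.sum_le_sum this).trans ?_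
  rw [← Finset.mul_sum]
  rfl

lemma aux_dTV_nonneg {J : ℕ} (P Q : Fin J → ℝ) : 0 ≤ dTV P Q :=
  Finset.sum_nonneg fun j _ => abs_nonneg _

lemma aux_dTV_le_two {J : ℕ} {P Q : Fin J → ℝ} (hP : P ∈ stdSimplex ℝ (Fin J))
    (hQ : Q ∈ stdSimplex ℝ (Fin J)) : dTV P Q ≤ 2 := by
  have h1 : ∀ j ∈ Finset.univ, |P j - Q j| ≤ P j + Q j := by
    intro j _
    calc |P j - Q j| = |P j + -(Q j)| := by rw [sub_eq_add_neg]
      _ ≤ |P j| + |-(Q j)| := abs_add_le _ _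
      _ = P j + Q j := by rw [abs_neg, abs_of_nonneg (hP.1 j), abs_of_nonneg (hQ.1 j)]
  refine (Finset.sum_le_sum h1).trans ?_
  rw [Finset.sum_add_distrib, hP.2, hQ.2]
  norm_num

lemma aux_ciSup_add {ι : Type*} [Nonempty ι] {f g : ι → ℝ} {c : ℝ}
    (hg : BddAbove (Set.range g)) (h : ∀ i, f i ≤ g i + c) :
    (⨆ i, f i) ≤ (⨆ i, g i) + c :=
  ciSup_le fun i => (h i).trans (add_le_add_left (le_ciSup hg i) c)

lemma aux_ciInf_add {ι : Type*} [Nonempty ι] {f g : ι → ℝ} {c : ℝ}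
    (hf : BddBelow (Set.range f)) (h : ∀ i, f i ≤ g i + c) :
    (⨅ i, f i) ≤ (⨅ i, g i) + c := by
  rw [← sub_le_iff_le_add]
  exact le_ciInf fun i => sub_le_iff_le_add.2 ((ciInf_le hf i).trans (h i))

lemma aux_abs_ciSup_sub {ι : Type*} [Nonempty ι] {f g : ι → ℝ} {c : ℝ}
    (hf : BddAbove (Set.range f)) (hg : BddAbove (Set.range g))
    (h : ∀ i, |f i - g i| ≤ c) : |(⨆ i, f i) - (⨆ i, g i)| ≤ c := by
  rw [abs_sub_le_iff]
  constructor
  · rw [sub_le_iff_le_add, add_comm]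
    exact aux_ciSup_add hg fun i => by
      have := (abs_sub_le_iff.1 (h i)).1; linarith
  · rw [sub_le_iff_le_add, add_comm]
    exact aux_ciSup_add hf fun i => by
      have := (abs_sub_le_iff.1 (h i)).2; linarith

lemma aux_abs_ciInf_sub {ι : Type*} [Nonempty ι] {f g : ι → ℝ} {c : ℝ}
    (hf : BddBelow (Set.range f)) (hg : BddBelow (Set.range g))
    (h : ∀ i, |f i - g i| ≤ c) : |(⨅ i, f i) - (⨅ i, g i)| ≤ c := by
  rw [abs_sub_le_iff]
  constructor
  · rw [sub_le_iff_le_add, add_comm]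
    exact aux_ciInf_add hf fun i => by
      have := (abs_sub_le_iff.1 (h i)).1; linarith
  · rw [sub_le_iff_le_add, add_comm]
    exact aux_ciInf_add hg fun i => by
      have := (abs_sub_le_iff.1 (h i)).2; linarith

lemma aux_abs_ciSup_le {ι : Type*} [Nonempty ι] {f : ι → ℝ} {B : ℝ}
    (h : ∀ i, |f i| ≤ B) : |⨆ i, f i| ≤ B := by
  have hbd : BddAbove (Set.range f) := ⟨B, by rintro _ ⟨i, rfl⟩; exact (abs_le.1 (h i)).2⟩
  rw [abs_le]
  exact ⟨(abs_le.1 (h (Classical.arbitrary ι))).1.trans (le_ciSup hbd _),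
    ciSup_le fun i => (abs_le.1 (h i)).2⟩

lemma aux_abs_ciInf_le {ι : Type*} [Nonempty ι] {f : ι → ℝ} {B : ℝ}
    (h : ∀ i, |f i| ≤ B) : |⨅ i, f i| ≤ B := by
  have hbd : BddBelow (Set.range f) := ⟨-B, by rintro _ ⟨i, rfl⟩; exact (abs_le.1 (h i)).1⟩
  rw [abs_le]
  exact ⟨le_ciInf fun i => (abs_le.1 (h i)).1,
    (ciInf_le hbd (Classical.arbitrary ι)).trans (abs_le.1 (h (Classical.arbitrary ι))).2⟩

lemma aux_sup_lip {J : ℕ} {B1 B2 : Set (Fin J → ℝ)} (h1 : B1.Nonempty) (h2 : B2.Nonempty)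
    (h1s : B1 ⊆ stdSimplex ℝ (Fin J)) (h2s : B2 ⊆ stdSimplex ℝ (Fin J))
    {f : (Fin J → ℝ) → ℝ} {L M : ℝ} (hL : 0 ≤ L)
    (hlip : ∀ Q ∈ B1, ∀ Q' ∈ B2, f Q ≤ f Q' + L * dTV Q Q')
    (hfM : ∀ Q ∈ B2, f Q ≤ M) :
    (⨆ Q : B1, f (Q : Fin J → ℝ)) ≤ (⨆ Q : B2, f (Q : Fin J → ℝ)) + L * excessD dTV B1 B2 := by
  haveI := h1.to_subtype
  haveI := h2.to_subtype
  have hbdd2 : BddAbove (Set.range fun Q : B2 => f (Q : Fin J → ℝ)) :=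
    ⟨M, by rintro _ ⟨Q, rfl⟩; exact hfM Q Q.2⟩
  refine ciSup_le fun Q => ?_
  set s2 : ℝ := ⨆ Q : B2, f (Q : Fin J → ℝ) with hs2
  set δ : ℝ := ⨅ Q' : B2, dTV (Q : Fin J → ℝ) (Q' : Fin J → ℝ) with hδ
  have hδbb : BddBelow (Set.range fun Q' : B2 => dTV (Q : Fin J → ℝ) (Q' : Fin J → ℝ)) :=
    ⟨0, by rintro _ ⟨Q', rfl⟩; exact aux_dTV_nonneg _ _⟩
  have key : f (Q : Fin J → ℝ) ≤ s2 + L * δ := by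
    rcases eq_or_lt_of_le hL with h0 | hLpos
    · obtain ⟨Q', hQ'⟩ := h2
      have := hlip Q Q.2 Q' hQ'
      rw [← h0] at this ⊢
      simp only [zero_mul, add_zero] at this ⊢
      exact this.trans (le_ciSup hbdd2 ⟨Q', hQ'⟩)
    · refine le_of_forall_sub_le fun ε hε => ?_
      have hlt : (⨅ Q' : B2, dTV (Q : Fin J → ℝ) (Q' : Fin J → ℝ)) < δ + ε / L :=
        lt_of_le_of_lt (le_of_eq hδ.symm) (lt_add_of_pos_right _ (div_pos hε hLpos))
      obtain ⟨Q', hQ'⟩ := exists_lt_of_ciInf_lt hlt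
      have h1' := hlip Q Q.2 Q' Q'.2
      have h2' : f (Q' : Fin J → ℝ) ≤ s2 := le_ciSup hbdd2 Q'
      have h3' : L * dTV (Q : Fin J → ℝ) (Q' : Fin J → ℝ) ≤ L * (δ + ε / L) :=
        mul_le_mul_of_nonneg_left hQ'.le hL
      have h4' : L * (δ + ε / L) = L * δ + ε := by field_simp
      linarith
  have hδbdd : BddAbove (Set.range fun Q1 : B1 =>
      ⨅ Q' : B2, dTV (Q1 : Fin J → ℝ) (Q' : Fin J → ℝ)) := by
    refine ⟨2, ?_⟩
    rintro _ ⟨Q1, rfl⟩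
    obtain ⟨Q0, hQ0⟩ := h2
    have hbb : BddBelow (Set.range fun Q' : B2 => dTV (Q1 : Fin J → ℝ) (Q' : Fin J → ℝ)) :=
      ⟨0, by rintro _ ⟨Q', rfl⟩; exact aux_dTV_nonneg _ _⟩
    exact (ciInf_le hbb ⟨Q0, hQ0⟩).trans (aux_dTV_le_two (h1s Q1.2) (h2s hQ0))
  have hδle : δ ≤ excessD dTV B1 B2 := le_ciSup hδbdd Q
  exact key.trans (add_le_add_right (mul_le_mul_of_nonneg_left hδle hL) s2)

lemma aux_wnorm_le {m : ℕ} {S : Set (Fin m → ℝ)} {w V : (Fin m → ℝ) → ℝ}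
    (hw : ∀ s ∈ S, 1 ≤ w s) {c : ℝ} (hc : 0 ≤ c)
    (h : ∀ s ∈ S, |V s| ≤ c * w s) : wSupNorm S w V ≤ c := by
  refine Real.iSup_le (fun s => ?_) hc
  have hws : (0:ℝ) < w s := lt_of_lt_of_le one_pos (hw s s.2)
  rw [div_le_iff₀ hws]
  exact h s s.2

lemma aux_wnorm_ge {m : ℕ} {S : Set (Fin m → ℝ)} {w V : (Fin m → ℝ) → ℝ}
    (hw : ∀ s ∈ S, 1 ≤ w s) {M : ℝ} (hM : ∀ s ∈ S, |V s| ≤ M * w s) {s : Fin m → ℝ}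
    (hs : s ∈ S) : |V s| ≤ wSupNorm S w V * w s := by
  have hws : (0:ℝ) < w s := lt_of_lt_of_le one_pos (hw s hs)
  have hbdd : BddAbove (Set.range fun t : S => |V (t : Fin m → ℝ)| / w (t : Fin m → ℝ)) := by
    refine ⟨max M 0, ?_⟩
    rintro _ ⟨t, rfl⟩
    have hwt : (0:ℝ) < w (t : Fin m → ℝ) := lt_of_lt_of_le one_pos (hw t t.2)
    rw [div_le_iff₀ hwt]
    exact (hM t t.2).trans (mul_le_mul_of_nonneg_right (le_max_left _ _) hwt.le)
  have := le_ciSup hbdd (⟨s, hs⟩ : S)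
  rw [div_le_iff₀ hws] at this
  exact this

lemma aux_wnorm_nonneg {m : ℕ} {S : Set (Fin m → ℝ)} {w V : (Fin m → ℝ) → ℝ}
    (hw : ∀ s ∈ S, 1 ≤ w s) : 0 ≤ wSupNorm S w V :=
  Real.iSup_nonneg fun s => div_nonneg (abs_nonneg _)
    (le_trans zero_le_one (hw s s.2))


set_option maxHeartbeats 1600000 in
/-- quantitative stability of the robust optimal action set at `sbar`
under a second-order growth condition. -/
theorem robust_policy_stability_quantitative
    (J m n : ℕ) (hJ : 2 ≤ J)
    (S : Set (Fin m → ℝ)) (hS : S.Nonempty) (hScl : IsClosed S)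
    (A : Set (Fin n → ℝ)) (hA : A.Nonempty) (hAcp : IsCompact A)
    (C : (Fin m → ℝ) → (Fin n → ℝ) → Fin J → ℝ)
    (g : (Fin m → ℝ) → (Fin n → ℝ) → Fin J → Fin m → ℝ)
    (hCcont : ∀ j, ContinuousOn (fun p : (Fin m → ℝ) × (Fin n → ℝ) => C p.1 p.2 j) (S ×ˢ A))
    (hgcont : ∀ j, ContinuousOn (fun p : (Fin m → ℝ) × (Fin n → ℝ) => g p.1 p.2 j) (S ×ˢ A))
    (hgS : ∀ s ∈ S, ∀ a ∈ A, ∀ j, g s a j ∈ S)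
    (γ : ℝ) (hγ0 : 0 ≤ γ) (hγ1 : γ < 1)
    (w : (Fin m → ℝ) → ℝ) (hw1 : ∀ s ∈ S, 1 ≤ w s) (hwcont : ContinuousOn w S)
    (Cbar κ : ℝ) (hCbar0 : 0 < Cbar) (hκ0 : 0 ≤ κ)
    (hCb : ∀ s ∈ S, ∀ a ∈ A, ∀ j, |C s a j| ≤ Cbar * w s)
    (hdrift : ∀ s ∈ S, ∀ a ∈ A, ∀ j, w (g s a j) ≤ κ * w s)
    (hγκ : γ * κ < 1)
    (Phat rhat : Fin J → ℝ) (hPhat : Phat ∈ stdSimplex ℝ (Fin J)) (hrhat : ∀ j, 0 ≤ rhat j)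
    (hboxne : (boxSet J Phat rhat).Nonempty)
    (Ptil rtil : Fin J → ℝ) (hPtil : Ptil ∈ stdSimplex ℝ (Fin J)) (hrtil : ∀ j, 0 ≤ rtil j)
    (hboxne' : (boxSet J Ptil rtil).Nonempty)
    (Vhat : (Fin m → ℝ) → ℝ) (hVhatBd : ∃ M, ∀ s ∈ S, |Vhat s| ≤ M * w s)
    (hVhatFix : ∀ s ∈ S, Vhat s = robustBellman A (boxSet J Phat rhat) C g γ Vhat s)
    (Vtil : (Fin m → ℝ) → ℝ) (hVtilBd : ∃ M, ∀ s ∈ S, |Vtil s| ≤ M * w s)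
    (hVtilFix : ∀ s ∈ S, Vtil s = robustBellman A (boxSet J Ptil rtil) C g γ Vtil s)
    (sbar : Fin m → ℝ) (hsbar : sbar ∈ S)
    -- the nominal and perturbed robust optimal action sets at `sbar`
    (Ahat Atil : Set (Fin n → ℝ))
    (hAhat : Ahat = {a ∈ A | ∀ a' ∈ A,
        (⨆ Q : boxSet J Phat rhat, expec (Q : Fin J → ℝ)
            (fun j => C sbar a j + γ * Vhat (g sbar a j))) ≤
        (⨆ Q : boxSet J Phat rhat, expec (Q : Fin J → ℝ)
            (fun j => C sbar a' j + γ * Vhat (g sbar a' j)))})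
    (hAtil : Atil = {a ∈ A | ∀ a' ∈ A,
        (⨆ Q : boxSet J Ptil rtil, expec (Q : Fin J → ℝ)
            (fun j => C sbar a j + γ * Vtil (g sbar a j))) ≤
        (⨆ Q : boxSet J Ptil rtil, expec (Q : Fin J → ℝ)
            (fun j => C sbar a' j + γ * Vtil (g sbar a' j)))})
    -- second-order growth condition at the nominal optimal action set
    (ν : ℝ) (hν : 0 < ν)
    (hgrowth : ∀ a ∈ A,
      Vhat sbar + ν * (eDistSet a Ahat) ^ 2 ≤
        ⨆ Q : boxSet J Phat rhat, expec (Q : Fin J → ℝ)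
          (fun j => C sbar a j + γ * Vhat (g sbar a j))) :
    excessD (fun a b => eDist a b) Atil Ahat ≤
      Real.sqrt ((3 * Cbar * w sbar / (ν * (1 - γ * κ) ^ 2)) *
        hausD dTV (boxSet J Phat rhat) (boxSet J Ptil rtil)) := by
  classical
  haveI hAne : Nonempty A := hA.to_subtype
  haveI hBhne : Nonempty (boxSet J Phat rhat) := hboxne.to_subtype
  haveI hBtne : Nonempty (boxSet J Ptil rtil) := hboxne'.to_subtype
  set Bh := boxSet J Phat rhat with hBh
  set Bt := boxSet J Ptil rtil with hBt
  have hBhsub : Bh ⊆ stdSimplex ℝ (Fin J) := fun Q hQ => hQ.1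
  have hBtsub : Bt ⊆ stdSimplex ℝ (Fin J) := fun Q hQ => hQ.1
  have hκγ : (0:ℝ) ≤ γ * κ := mul_nonneg hγ0 hκ0
  have h1γκ : (0:ℝ) < 1 - γ * κ := by linarith
  set N := Cbar / (1 - γ * κ) with hN
  have hN0 : 0 < N := div_pos hCbar0 h1γκ
  have hNid : Cbar + γ * κ * N = N := by
    rw [hN]; field_simp; ring
  set H := hausD dTV Bh Bt with hH
  have hexc1 : excessD dTV Bh Bt ≤ H := le_max_left _ _
  have hexc2 : excessD dTV Bt Bh ≤ H := le_max_right _ _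
  have hH0 : 0 ≤ H := by
    refine le_trans ?_ hexc1
    exact Real.iSup_nonneg fun Q => Real.iInf_nonneg fun Q' => aux_dTV_nonneg _ _
  have hwpos : ∀ t ∈ S, (0:ℝ) < w t := fun t ht => lt_of_lt_of_le one_pos (hw1 t ht)
  -- generic bound on the integrand
  have hband : ∀ (V : (Fin m → ℝ) → ℝ) (NV : ℝ), 0 ≤ NV → (∀ t ∈ S, |V t| ≤ NV * w t) →
      ∀ t ∈ S, ∀ a ∈ A, ∀ j, |C t a j + γ * V (g t a j)| ≤ (Cbar + γ * κ * NV) * w t := by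
    intro V NV hNV0 hNV t ht a ha j
    have hgs := hgS t ht a ha j
    have h1 := hCb t ht a ha j
    have h2 : |γ * V (g t a j)| ≤ γ * (NV * (κ * w t)) := by
      rw [abs_mul, abs_of_nonneg hγ0]
      refine mul_le_mul_of_nonneg_left ?_ hγ0
      refine (hNV _ hgs).trans ?_
      exact mul_le_mul_of_nonneg_left (hdrift t ht a ha j) hNV0
    calc |C t a j + γ * V (g t a j)| ≤ |C t a j| + |γ * V (g t a j)| := abs_add_le _ _
      _ ≤ Cbar * w t + γ * (NV * (κ * w t)) := add_le_add h1 h2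
      _ = (Cbar + γ * κ * NV) * w t := by ring
  -- fixed points are bounded by N * w
  have hnormbd : ∀ (V : (Fin m → ℝ) → ℝ), (∃ M, ∀ t ∈ S, |V t| ≤ M * w t) →
      ∀ (amb : Set (Fin J → ℝ)), amb.Nonempty → amb ⊆ stdSimplex ℝ (Fin J) →
      (∀ t ∈ S, V t = robustBellman A amb C g γ V t) →
      ∀ t ∈ S, |V t| ≤ N * w t := by
    intro V hVbd amb hambne hambsub hVfix
    haveI := hambne.to_subtype
    obtain ⟨M, hM⟩ := hVbd
    set MV := wSupNorm S w V with hMV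
    have hMV0 : 0 ≤ MV := aux_wnorm_nonneg hw1
    have hMVge : ∀ t ∈ S, |V t| ≤ MV * w t := fun t ht => aux_wnorm_ge hw1 hM ht
    have hcw : ∀ t ∈ S, |V t| ≤ (Cbar + γ * κ * MV) * w t := by
      intro t ht
      rw [hVfix t ht]
      exact aux_abs_ciInf_le fun a => aux_abs_ciSup_le fun Q =>
        aux_abs_expec_le (hambsub Q.2) (hband V MV hMV0 hMVge t ht a a.2)
    have hc0 : 0 ≤ Cbar + γ * κ * MV := by positivity
    have hMVle : MV ≤ Cbar + γ * κ * MV := aux_wnorm_le hw1 hc0 hcw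
    have hMVN : MV ≤ N := by
      rw [hN, le_div_iff₀ h1γκ]; nlinarith
    intro t ht
    exact (hMVge t ht).trans (mul_le_mul_of_nonneg_right hMVN (hwpos t ht).le)
  have hVhN : ∀ t ∈ S, |Vhat t| ≤ N * w t :=
    hnormbd Vhat hVhatBd Bh hboxne hBhsub hVhatFix
  have hVtN : ∀ t ∈ S, |Vtil t| ≤ N * w t :=
    hnormbd Vtil hVtilBd Bt hboxne' hBtsub hVtilFix
  -- integrand bounds with the uniform constant N
  have hbh : ∀ t ∈ S, ∀ a ∈ A, ∀ j, |C t a j + γ * Vhat (g t a j)| ≤ N * w t := by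
    intro t ht a ha j
    have := hband Vhat N hN0.le hVhN t ht a ha j
    rwa [hNid] at this
  have hbt : ∀ t ∈ S, ∀ a ∈ A, ∀ j, |C t a j + γ * Vtil (g t a j)| ≤ N * w t := by
    intro t ht a ha j
    have := hband Vtil N hN0.le hVtN t ht a ha j
    rwa [hNid] at this
  -- weighted distance between the two fixed points
  set D := wSupNorm S w (fun t => Vhat t - Vtil t) with hD
  have hD0 : 0 ≤ D := aux_wnorm_nonneg hw1
  have hDbd : ∀ t ∈ S, |Vhat t - Vtil t| ≤ (N + N) * w t := by
    intro t ht
    calc |Vhat t - Vtil t| = |Vhat t + -(Vtil t)| := by rw [sub_eq_add_neg]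
      _ ≤ |Vhat t| + |-(Vtil t)| := abs_add_le _ _
      _ = |Vhat t| + |Vtil t| := by rw [abs_neg]
      _ ≤ N * w t + N * w t := add_le_add (hVhN t ht) (hVtN t ht)
      _ = (N + N) * w t := by ring
  have hDge : ∀ t ∈ S, |Vhat t - Vtil t| ≤ D * w t := fun t ht =>
    aux_wnorm_ge hw1 hDbd ht
  -- the key sup-level comparison
  have hkey : ∀ t ∈ S, ∀ a ∈ A,
      |(⨆ Q : Bh, expec (Q : Fin J → ℝ) (fun j => C t a j + γ * Vhat (g t a j))) -
       (⨆ Q : Bt, expec (Q : Fin J → ℝ) (fun j => C t a j + γ * Vtil (g t a j)))| ≤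
        (γ * κ * D + N * H) * w t := by
    intro t ht a ha
    have hNwt : (0:ℝ) ≤ N * w t := mul_nonneg hN0.le (hwpos t ht).le
    have hbd1 : BddAbove (Set.range fun Q : Bh =>
        expec (Q : Fin J → ℝ) (fun j => C t a j + γ * Vhat (g t a j))) :=
      ⟨N * w t, by rintro _ ⟨Q, rfl⟩
                   exact (abs_le.1 (aux_abs_expec_le (hBhsub Q.2) (hbh t ht a ha))).2⟩
    have hbd2 : BddAbove (Set.range fun Q : Bh =>
        expec (Q : Fin J → ℝ) (fun j => C t a j + γ * Vtil (g t a j))) :=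
      ⟨N * w t, by rintro _ ⟨Q, rfl⟩
                   exact (abs_le.1 (aux_abs_expec_le (hBhsub Q.2) (hbt t ht a ha))).2⟩
    have part1 : |(⨆ Q : Bh, expec (Q : Fin J → ℝ) (fun j => C t a j + γ * Vhat (g t a j))) -
        (⨆ Q : Bh, expec (Q : Fin J → ℝ) (fun j => C t a j + γ * Vtil (g t a j)))| ≤
          γ * (D * (κ * w t)) := by
      refine aux_abs_ciSup_sub hbd1 hbd2 fun Q => ?_
      have heq : expec (Q : Fin J → ℝ) (fun j => C t a j + γ * Vhat (g t a j)) -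
          expec (Q : Fin J → ℝ) (fun j => C t a j + γ * Vtil (g t a j)) =
          γ * expec (Q : Fin J → ℝ) (fun j => Vhat (g t a j) - Vtil (g t a j)) := by
        simp only [expec, Finset.mul_sum, ← Finset.sum_sub_distrib]
        exact Finset.sum_congr rfl fun j _ => by ring
      rw [heq, abs_mul, abs_of_nonneg hγ0]
      refine mul_le_mul_of_nonneg_left ?_ hγ0
      refine aux_abs_expec_le (hBhsub Q.2) fun j => ?_
      calc |Vhat (g t a j) - Vtil (g t a j)| ≤ D * w (g t a j) :=
            hDge _ (hgS t ht a ha j)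
        _ ≤ D * (κ * w t) := mul_le_mul_of_nonneg_left (hdrift t ht a ha j) hD0
    have hlip1 : ∀ Q ∈ Bh, ∀ Q' ∈ Bt,
        expec Q (fun j => C t a j + γ * Vtil (g t a j)) ≤
        expec Q' (fun j => C t a j + γ * Vtil (g t a j)) + (N * w t) * dTV Q Q' := by
      intro Q hQ Q' hQ'
      have := aux_abs_expec_sub_le (P := Q) (Q := Q') (hbt t ht a ha)
      linarith [(abs_sub_le_iff.1 this).1]
    have hlip2 : ∀ Q ∈ Bt, ∀ Q' ∈ Bh,
        expec Q (fun j => C t a j + γ * Vtil (g t a j)) ≤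
        expec Q' (fun j => C t a j + γ * Vtil (g t a j)) + (N * w t) * dTV Q Q' := by
      intro Q hQ Q' hQ'
      have := aux_abs_expec_sub_le (P := Q) (Q := Q') (hbt t ht a ha)
      linarith [(abs_sub_le_iff.1 this).1]
    have hfM1 : ∀ Q ∈ Bt, expec Q (fun j => C t a j + γ * Vtil (g t a j)) ≤ N * w t :=
      fun Q hQ => (abs_le.1 (aux_abs_expec_le (hBtsub hQ) (hbt t ht a ha))).2
    have hfM2 : ∀ Q ∈ Bh, expec Q (fun j => C t a j + γ * Vtil (g t a j)) ≤ N * w t :=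
      fun Q hQ => (abs_le.1 (aux_abs_expec_le (hBhsub hQ) (hbt t ht a ha))).2
    have part2 : |(⨆ Q : Bh, expec (Q : Fin J → ℝ) (fun j => C t a j + γ * Vtil (g t a j))) -
        (⨆ Q : Bt, expec (Q : Fin J → ℝ) (fun j => C t a j + γ * Vtil (g t a j)))| ≤
          (N * w t) * H := by
      rw [abs_sub_le_iff]
      have hh1 := (aux_sup_lip hboxne hboxne' hBhsub hBtsub hNwt hlip1 hfM1).trans
        (add_le_add_right (mul_le_mul_of_nonneg_left hexc1 hNwt) _)
      have hh2 := (aux_sup_lip hboxne' hboxne hBtsub hBhsub hNwt hlip2 hfM2).trans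
        (add_le_add_right (mul_le_mul_of_nonneg_left hexc2 hNwt) _)
      constructor
      · linarith
      · linarith
    calc |(⨆ Q : Bh, expec (Q : Fin J → ℝ) (fun j => C t a j + γ * Vhat (g t a j))) -
          (⨆ Q : Bt, expec (Q : Fin J → ℝ) (fun j => C t a j + γ * Vtil (g t a j)))| ≤
        |(⨆ Q : Bh, expec (Q : Fin J → ℝ) (fun j => C t a j + γ * Vhat (g t a j))) -
          (⨆ Q : Bh, expec (Q : Fin J → ℝ) (fun j => C t a j + γ * Vtil (g t a j)))| +
        |(⨆ Q : Bh, expec (Q : Fin J → ℝ) (fun j => C t a j + γ * Vtil (g t a j))) -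
          (⨆ Q : Bt, expec (Q : Fin J → ℝ) (fun j => C t a j + γ * Vtil (g t a j)))| :=
        abs_sub_le _ _ _
      _ ≤ γ * (D * (κ * w t)) + (N * w t) * H := add_le_add part1 part2
      _ = (γ * κ * D + N * H) * w t := by ring
  -- recursion for D
  have hstep : ∀ t ∈ S, |Vhat t - Vtil t| ≤ (γ * κ * D + N * H) * w t := by
    intro t ht
    rw [hVhatFix t ht, hVtilFix t ht]
    show |(⨅ a : A, ⨆ Q : Bh, expec (Q : Fin J → ℝ)
        (fun j => C t a j + γ * Vhat (g t a j))) -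
      (⨅ a : A, ⨆ Q : Bt, expec (Q : Fin J → ℝ)
        (fun j => C t a j + γ * Vtil (g t a j)))| ≤ (γ * κ * D + N * H) * w t
    have habs1 : ∀ a : A, |⨆ Q : Bh, expec (Q : Fin J → ℝ)
        (fun j => C t a j + γ * Vhat (g t a j))| ≤ N * w t := fun a =>
      aux_abs_ciSup_le fun Q => aux_abs_expec_le (hBhsub Q.2) (hbh t ht a a.2)
    have habs2 : ∀ a : A, |⨆ Q : Bt, expec (Q : Fin J → ℝ)
        (fun j => C t a j + γ * Vtil (g t a j))| ≤ N * w t := fun a =>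
      aux_abs_ciSup_le fun Q => aux_abs_expec_le (hBtsub Q.2) (hbt t ht a a.2)
    have hbb1 : BddBelow (Set.range fun a : A => ⨆ Q : Bh, expec (Q : Fin J → ℝ)
        (fun j => C t a j + γ * Vhat (g t a j))) :=
      ⟨-(N * w t), by rintro _ ⟨a, rfl⟩; exact (abs_le.1 (habs1 a)).1⟩
    have hbb2 : BddBelow (Set.range fun a : A => ⨆ Q : Bt, expec (Q : Fin J → ℝ)
        (fun j => C t a j + γ * Vtil (g t a j))) :=
      ⟨-(N * w t), by rintro _ ⟨a, rfl⟩; exact (abs_le.1 (habs2 a)).1⟩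
    exact aux_abs_ciInf_sub hbb1 hbb2 fun a => hkey t ht a a.2
  have hDrec : D ≤ γ * κ * D + N * H := by
    refine aux_wnorm_le hw1 ?_ hstep
    positivity
  have hDE1 : D * (1 - γ * κ) ≤ N * H := by nlinarith
  have hRE : 0 < ν * (1 - γ * κ) ^ 2 := by positivity
  -- endgame: bound each point of Atil
  have hmem : ∀ x ∈ Atil, x ∈ A ∧ ∀ a' ∈ A,
      (⨆ Q : Bt, expec (Q : Fin J → ℝ) (fun j => C sbar x j + γ * Vtil (g sbar x j))) ≤
      ⨆ Q : Bt, expec (Q : Fin J → ℝ) (fun j => C sbar a' j + γ * Vtil (g sbar a' j)) := by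
    intro x hx
    rw [hAtil] at hx
    exact hx
  simp only [excessD]
  refine Real.iSup_le (fun a => ?_) (Real.sqrt_nonneg _)
  obtain ⟨b, hb⟩ := a
  obtain ⟨haA', hopt⟩ := hmem b hb
  set d := eDistSet b Ahat with hd
  have hd0 : 0 ≤ d := Real.iInf_nonneg fun b => Real.sqrt_nonneg _
  have hgrow := hgrowth b haA'
  -- step A
  have hstepA : (⨆ Q : Bh, expec (Q : Fin J → ℝ)
      (fun j => C sbar b j + γ * Vhat (g sbar b j))) ≤
      (⨆ Q : Bt, expec (Q : Fin J → ℝ)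
      (fun j => C sbar b j + γ * Vtil (g sbar b j))) +
        (γ * κ * D + N * H) * w sbar := by
    have := (abs_sub_le_iff.1 (hkey sbar hsbar b haA')).1
    linarith
  -- step B: a is optimal for the tilde problem
  have habs2 : ∀ a' : A, |⨆ Q : Bt, expec (Q : Fin J → ℝ)
      (fun j => C sbar (a' : Fin n → ℝ) j + γ * Vtil (g sbar (a' : Fin n → ℝ) j))| ≤
        N * w sbar := fun a' =>
    aux_abs_ciSup_le fun Q => aux_abs_expec_le (hBtsub Q.2) (hbt sbar hsbar a' a'.2)
  have hbb2 : BddBelow (Set.range fun a' : A => ⨆ Q : Bt, expec (Q : Fin J → ℝ)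
      (fun j => C sbar (a' : Fin n → ℝ) j + γ * Vtil (g sbar (a' : Fin n → ℝ) j))) :=
    ⟨-(N * w sbar), by rintro _ ⟨a', rfl⟩; exact (abs_le.1 (habs2 a')).1⟩
  have hstepB : (⨆ Q : Bt, expec (Q : Fin J → ℝ)
      (fun j => C sbar b j + γ * Vtil (g sbar b j))) =
      Vtil sbar := by
    rw [hVtilFix sbar hsbar]
    show _ = ⨅ a' : A, ⨆ Q : Bt, expec (Q : Fin J → ℝ)
      (fun j => C sbar (a' : Fin n → ℝ) j + γ * Vtil (g sbar (a' : Fin n → ℝ) j))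
    refine le_antisymm (le_ciInf fun a' => hopt a' a'.2) ?_
    exact ciInf_le hbb2 (⟨b, haA'⟩ : A)
  -- step C
  have hstepC : Vtil sbar ≤ Vhat sbar + D * w sbar := by
    have := (abs_sub_le_iff.1 (hDge sbar hsbar)).2
    linarith
  -- combine
  have hchain : ν * d ^ 2 ≤ (D + (γ * κ * D + N * H)) * w sbar := by
    have h1 : Vhat sbar + ν * d ^ 2 ≤ Vtil sbar + (γ * κ * D + N * H) * w sbar := by
      calc Vhat sbar + ν * d ^ 2 ≤ _ := hgrow
        _ ≤ _ := hstepA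
        _ = Vtil sbar + (γ * κ * D + N * H) * w sbar := by rw [hstepB]
    linarith [hstepC]
  -- numeric cleanup
  have hgoal : d ^ 2 ≤ (3 * Cbar * w sbar / (ν * (1 - γ * κ) ^ 2)) * H := by
    rw [div_mul_eq_mul_div, le_div_iff₀ hRE]
    have hNHE : N * H * (1 - γ * κ) = Cbar * H := by
      rw [hN]; field_simp
    have hE1 : 1 - γ * κ ≤ 1 := by linarith
    have hw0 : (1:ℝ) ≤ w sbar := hw1 sbar hsbar
    have hCH : 0 ≤ Cbar * H := mul_nonneg hCbar0.le hH0
    have hDE2 : D * (1 - γ * κ) ^ 2 ≤ Cbar * H := by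
      have h := mul_le_mul_of_nonneg_right hDE1 h1γκ.le
      nlinarith [h, hNHE]
    have hNH2 : N * H * (1 - γ * κ) ^ 2 ≤ Cbar * H := by
      have h : N * H * (1 - γ * κ) ^ 2 = Cbar * H * (1 - γ * κ) := by
        rw [← hNHE]; ring
      rw [h]
      nlinarith [mul_nonneg hCH hκγ]
    have e1 : ν * d ^ 2 * (1 - γ * κ) ^ 2 ≤
        (D + (γ * κ * D + N * H)) * w sbar * (1 - γ * κ) ^ 2 :=
      mul_le_mul_of_nonneg_right hchain (sq_nonneg _)
    have e2 : (D + (γ * κ * D + N * H)) * (1 - γ * κ) ^ 2 ≤ 3 * (Cbar * H) := by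
      have hk := mul_le_mul_of_nonneg_left hDE2 hκγ
      nlinarith [hDE2, hNH2, hk, mul_nonneg hκγ hCH, hCH]
    have e3 : (D + (γ * κ * D + N * H)) * w sbar * (1 - γ * κ) ^ 2 ≤
        3 * (Cbar * H) * w sbar := by
      have := mul_le_mul_of_nonneg_right e2 (le_trans zero_le_one hw0)
      nlinarith [this]
    nlinarith [e1, e3]
  calc (⨅ y : Ahat, eDist b (y : Fin n → ℝ)) = d := rfl
    _ = Real.sqrt (d ^ 2) := (Real.sqrt_sq hd0).symm
    _ ≤ _ := Real.sqrt_le_sqrt hgoal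

end
end

section
/- Consider the bounded-cost setup on a compact state space with robust Bellman operator L̂ (a monotone γ-contraction in the sup norm with unique fixed point V̂*). Let V̲^0 ≡ −C̄/(1−γ) and suppose that for each k ≥ 0 there is a continuous function ℓ_{k+1} : S → ℝ and a trial point s̄_k ∈ S such that ℓ_{k+1} ≤ L̂(V̲^k) pointwise on S and ℓ_{k+1}(s̄_k) = (L̂ V̲^k)(s̄_k), and define V̲^{k+1} := max(V̲^k, ℓ_{k+1}). Assume: (i) the trial points are dense, i.e., for every s ∈ S, ε > 0 and K ∈ ℕ there exists k ≥ K with ‖s̄_k − s‖ < ε; and (ii) the pointwise limit V̲^∞ := lim_k V̲^k is continuous on S. Then V̲^k(s) increases to V̂*(s) for every s ∈ S and ‖V̲^k − V̂*‖_∞ → 0 as k → ∞. -/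
open Filter Topology

noncomputable section

section BocpAux

lemma bocp_expec_le_expec_add {J : ℕ} {Q h h' : Fin J → ℝ} {e : ℝ}
    (hQ0 : ∀ j, 0 ≤ Q j) (hQ1 : ∑ j, Q j = 1) (hh : ∀ j, h j ≤ h' j + e) :
    expec Q h ≤ expec Q h' + e := by
  have h1 : expec Q h ≤ expec Q (fun j => h' j + e) :=
    Finset.sum_le_sum fun j _ => mul_le_mul_of_nonneg_left (hh j) (hQ0 j)
  have h2 : expec Q (fun j => h' j + e) = expec Q h' + e := by
    simp only [expec, mul_add, Finset.sum_add_distrib, ← Finset.sum_mul, hQ1, one_mul]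
  linarith

lemma bocp_expec_le_const {J : ℕ} {Q h : Fin J → ℝ} {c : ℝ}
    (hQ0 : ∀ j, 0 ≤ Q j) (hQ1 : ∑ j, Q j = 1) (hh : ∀ j, h j ≤ c) :
    expec Q h ≤ c := by
  have h1 : expec Q h ≤ ∑ j, Q j * c :=
    Finset.sum_le_sum fun j _ => mul_le_mul_of_nonneg_left (hh j) (hQ0 j)
  rwa [← Finset.sum_mul, hQ1, one_mul] at h1

lemma bocp_const_le_expec {J : ℕ} {Q h : Fin J → ℝ} {c : ℝ}
    (hQ0 : ∀ j, 0 ≤ Q j) (hQ1 : ∑ j, Q j = 1) (hh : ∀ j, c ≤ h j) :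
    c ≤ expec Q h := by
  have h1 : (∑ j, Q j * c) ≤ expec Q h :=
    Finset.sum_le_sum fun j _ => mul_le_mul_of_nonneg_left (hh j) (hQ0 j)
  rwa [← Finset.sum_mul, hQ1, one_mul] at h1

lemma bocp_abs_expec_le {J : ℕ} {Q h : Fin J → ℝ} {M : ℝ}
    (hQ0 : ∀ j, 0 ≤ Q j) (hQ1 : ∑ j, Q j = 1) (hh : ∀ j, |h j| ≤ M) :
    |expec Q h| ≤ M := by
  rw [abs_le]
  exact ⟨bocp_const_le_expec hQ0 hQ1 fun j => neg_le_of_abs_le (hh j),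
    bocp_expec_le_const hQ0 hQ1 fun j => le_of_abs_le (hh j)⟩

lemma bocp_bellman_le_bellman
    {J m n : ℕ} {A : Set (Fin n → ℝ)} {amb : Set (Fin J → ℝ)}
    {C : (Fin m → ℝ) → (Fin n → ℝ) → Fin J → ℝ}
    {g : (Fin m → ℝ) → (Fin n → ℝ) → Fin J → Fin m → ℝ} {γ : ℝ}
    (hA : A.Nonempty) (hamb : amb.Nonempty) (hambs : amb ⊆ stdSimplex ℝ (Fin J))
    {V V' : (Fin m → ℝ) → ℝ} {s s' : Fin m → ℝ} {M M' e : ℝ}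
    (hbV : ∀ a ∈ A, ∀ j, |C s a j + γ * V (g s a j)| ≤ M)
    (hbV' : ∀ a ∈ A, ∀ j, |C s' a j + γ * V' (g s' a j)| ≤ M')
    (hpt : ∀ a ∈ A, ∀ j, C s a j + γ * V (g s a j) ≤ C s' a j + γ * V' (g s' a j) + e) :
    robustBellman A amb C g γ V s ≤ robustBellman A amb C g γ V' s' + e := by
  haveI := hA.to_subtype; haveI := hamb.to_subtype
  set f : A → amb → ℝ :=
    fun a Q => expec (Q : Fin J → ℝ) (fun j => C s (a : Fin n → ℝ) j
      + γ * V (g s (a : Fin n → ℝ) j)) with hf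
  set f' : A → amb → ℝ :=
    fun a Q => expec (Q : Fin J → ℝ) (fun j => C s' (a : Fin n → ℝ) j
      + γ * V' (g s' (a : Fin n → ℝ) j)) with hf'
  have hQ0 : ∀ Q : amb, ∀ j, 0 ≤ (Q : Fin J → ℝ) j := fun Q j => (hambs Q.2).1 j
  have hQ1 : ∀ Q : amb, ∑ j, (Q : Fin J → ℝ) j = 1 := fun Q => (hambs Q.2).2
  have hfb : ∀ a : A, ∀ Q : amb, |f a Q| ≤ M :=
    fun a Q => bocp_abs_expec_le (hQ0 Q) (hQ1 Q) (hbV a a.2)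
  have hf'b : ∀ a : A, ∀ Q : amb, |f' a Q| ≤ M' :=
    fun a Q => bocp_abs_expec_le (hQ0 Q) (hQ1 Q) (hbV' a a.2)
  have hXb : ∀ a : A, BddAbove (Set.range fun Q : amb => f a Q) :=
    fun a => ⟨M, Set.forall_mem_range.2 fun Q => le_of_abs_le (hfb a Q)⟩
  have hYb : ∀ a : A, BddAbove (Set.range fun Q : amb => f' a Q) :=
    fun a => ⟨M', Set.forall_mem_range.2 fun Q => le_of_abs_le (hf'b a Q)⟩
  have hXbdd : BddBelow (Set.range fun a : A => ⨆ Q : amb, f a Q) := by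
    refine ⟨-M, Set.forall_mem_range.2 fun a => ?_⟩
    exact le_trans (neg_le_of_abs_le (hfb a (Classical.arbitrary amb)))
      (le_ciSup (hXb a) (Classical.arbitrary amb))
  have hstep : ∀ a : A, (⨆ Q : amb, f a Q) ≤ (⨆ Q : amb, f' a Q) + e := by
    intro a
    refine ciSup_le fun Q => ?_
    refine le_trans (bocp_expec_le_expec_add (hQ0 Q) (hQ1 Q) (hpt a a.2)) ?_
    exact add_le_add_left (le_ciSup (hYb a) Q) e
  show (⨅ a : A, ⨆ Q : amb, f a Q) ≤ (⨅ a : A, ⨆ Q : amb, f' a Q) + e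
  rw [← sub_le_iff_le_add]
  refine le_ciInf fun a => ?_
  rw [sub_le_iff_le_add]
  exact (ciInf_le hXbdd a).trans (hstep a)

lemma bocp_const_le_bellman
    {J m n : ℕ} {A : Set (Fin n → ℝ)} {amb : Set (Fin J → ℝ)}
    {C : (Fin m → ℝ) → (Fin n → ℝ) → Fin J → ℝ}
    {g : (Fin m → ℝ) → (Fin n → ℝ) → Fin J → Fin m → ℝ} {γ : ℝ}
    (hA : A.Nonempty) (hamb : amb.Nonempty) (hambs : amb ⊆ stdSimplex ℝ (Fin J))
    {V : (Fin m → ℝ) → ℝ} {s : Fin m → ℝ} {M c : ℝ}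
    (hbV : ∀ a ∈ A, ∀ j, |C s a j + γ * V (g s a j)| ≤ M)
    (hpt : ∀ a ∈ A, ∀ j, c ≤ C s a j + γ * V (g s a j)) :
    c ≤ robustBellman A amb C g γ V s := by
  haveI := hA.to_subtype; haveI := hamb.to_subtype
  set f : A → amb → ℝ :=
    fun a Q => expec (Q : Fin J → ℝ) (fun j => C s (a : Fin n → ℝ) j
      + γ * V (g s (a : Fin n → ℝ) j)) with hf
  have hQ0 : ∀ Q : amb, ∀ j, 0 ≤ (Q : Fin J → ℝ) j := fun Q j => (hambs Q.2).1 j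
  have hQ1 : ∀ Q : amb, ∑ j, (Q : Fin J → ℝ) j = 1 := fun Q => (hambs Q.2).2
  have hXb : ∀ a : A, BddAbove (Set.range fun Q : amb => f a Q) :=
    fun a => ⟨M, Set.forall_mem_range.2 fun Q =>
      le_of_abs_le (bocp_abs_expec_le (hQ0 Q) (hQ1 Q) (hbV a a.2))⟩
  refine le_ciInf fun a => ?_
  refine le_trans ?_ (le_ciSup (hXb a) (Classical.arbitrary amb))
  exact bocp_const_le_expec (hQ0 _) (hQ1 _) (hpt a a.2)

lemma bocp_dini {m : ℕ} {S : Set (Fin m → ℝ)} (hScp : IsCompact S)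
    {F : ℕ → (Fin m → ℝ) → ℝ} {f : (Fin m → ℝ) → ℝ}
    (hFc : ∀ k, ContinuousOn (F k) S) (hfc : ContinuousOn f S)
    (hmono : ∀ x ∈ S, ∀ k l, k ≤ l → F k x ≤ F l x)
    (hlim : ∀ x ∈ S, Tendsto (fun k => F k x) atTop (𝓝 (f x)))
    {ε : ℝ} (hε : 0 < ε) :
    ∃ K, ∀ k ≥ K, ∀ x ∈ S, f x - F k x < ε := by
  classical
  have key : ∀ x ∈ S, ∃ (k : ℕ) (u : Set (Fin m → ℝ)),
      IsOpen u ∧ x ∈ u ∧ ∀ y ∈ u ∩ S, f y - F k y < ε := by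
    intro x hx
    obtain ⟨k, hk⟩ : ∃ k, f x - F k x < ε / 2 := by
      obtain ⟨K, hK⟩ := (Metric.tendsto_atTop.1 (hlim x hx)) (ε / 2) (by linarith)
      refine ⟨K, ?_⟩
      have := hK K le_rfl
      rw [Real.dist_eq, abs_lt] at this
      linarith [this.1, this.2]
    have hc : ContinuousWithinAt (fun y => f y - F k y) S x :=
      (hfc x hx).sub ((hFc k) x hx)
    have hev : (fun y => f y - F k y) ⁻¹' (Set.Iio ε) ∈ 𝓝[S] x :=
      hc (Iio_mem_nhds (show f x - F k x < ε by linarith))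
    rw [mem_nhdsWithin] at hev
    obtain ⟨u, huo, hxu, hsub⟩ := hev
    exact ⟨k, u, huo, hxu, fun y hy => hsub hy⟩
  choose k u huo hxu hu using key
  obtain ⟨t, ht⟩ := hScp.elim_nhds_subcover' (fun x hx => u x hx)
    (fun x hx => (huo x hx).mem_nhds (hxu x hx))
  refine ⟨t.sup (fun z => k z.1 z.2), fun l hl y hy => ?_⟩
  obtain ⟨x, hxt, hyu⟩ : ∃ x ∈ t, y ∈ u x.1 x.2 := by
    have := ht hy
    simpa using this
  have h1 : f y - F (k x.1 x.2) y < ε := hu x.1 x.2 y ⟨hyu, hy⟩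
  have h2 : F (k x.1 x.2) y ≤ F l y :=
    hmono y hy _ _ (le_trans (Finset.le_sup (f := fun z => k z.1 z.2) hxt) hl)
  linarith

end BocpAux

set_option maxHeartbeats 2000000 in
/-- convergence of the Bellman-operator cutting-plane algorithm.
With tight supporting cuts generated at a dense sequence of trial points and a
continuous pointwise limit, the lower approximations increase pointwise to the
robust optimal value function and converge uniformly on `S`. -/
theorem bocp_convergence
    (J m n : ℕ) (hJ : 2 ≤ J)
    (S : Set (Fin m → ℝ)) (hS : S.Nonempty) (hScp : IsCompact S)
    (A : Set (Fin n → ℝ)) (hA : A.Nonempty) (hAcp : IsCompact A)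
    (C : (Fin m → ℝ) → (Fin n → ℝ) → Fin J → ℝ)
    (g : (Fin m → ℝ) → (Fin n → ℝ) → Fin J → Fin m → ℝ)
    (hCcont : ∀ j, ContinuousOn (fun p : (Fin m → ℝ) × (Fin n → ℝ) => C p.1 p.2 j) (S ×ˢ A))
    (hgcont : ∀ j, ContinuousOn (fun p : (Fin m → ℝ) × (Fin n → ℝ) => g p.1 p.2 j) (S ×ˢ A))
    (hgS : ∀ s ∈ S, ∀ a ∈ A, ∀ j, g s a j ∈ S)
    (γ : ℝ) (hγ0 : 0 ≤ γ) (hγ1 : γ < 1)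
    (Cbar : ℝ) (hCbar0 : 0 ≤ Cbar)
    (hCb : ∀ s ∈ S, ∀ a ∈ A, ∀ j, |C s a j| ≤ Cbar)
    (Phat rhat : Fin J → ℝ) (hPhat : Phat ∈ stdSimplex ℝ (Fin J)) (hrhat : ∀ j, 0 ≤ rhat j)
    (hboxne : (boxSet J Phat rhat).Nonempty)
    (Vhat : (Fin m → ℝ) → ℝ) (hVhatBd : ∃ M, ∀ s ∈ S, |Vhat s| ≤ M)
    (hVhatFix : ∀ s ∈ S, Vhat s = robustBellman A (boxSet J Phat rhat) C g γ Vhat s)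
    (Vlow : ℕ → (Fin m → ℝ) → ℝ) (cut : ℕ → (Fin m → ℝ) → ℝ)
    (hV0 : ∀ s ∈ S, Vlow 0 s = -Cbar / (1 - γ))
    (hcutCont : ∀ k, ContinuousOn (cut (k + 1)) S)
    (hcut : ∀ k, ∀ s ∈ S,
      cut (k + 1) s ≤ robustBellman A (boxSet J Phat rhat) C g γ (Vlow k) s)
    (hupd : ∀ k, ∀ s ∈ S, Vlow (k + 1) s = max (Vlow k s) (cut (k + 1) s))
    -- trial points at which the cuts are tight
    (sbar : ℕ → Fin m → ℝ) (hsbarS : ∀ k, sbar k ∈ S)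
    (htight : ∀ k,
      cut (k + 1) (sbar k) = robustBellman A (boxSet J Phat rhat) C g γ (Vlow k) (sbar k))
    -- (i) density of the trial points in `S`
    (hdense : ∀ s ∈ S, ∀ ε > (0 : ℝ), ∀ K : ℕ, ∃ k ≥ K, ‖sbar k - s‖ < ε)
    -- (ii) the pointwise limit exists and is continuous on `S`
    (Vinf : (Fin m → ℝ) → ℝ)
    (hVinf : ∀ s ∈ S, Tendsto (fun k => Vlow k s) atTop (𝓝 (Vinf s)))
    (hVinfCont : ContinuousOn Vinf S) :
    (∀ s ∈ S, (Monotone fun k => Vlow k s) ∧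
      Tendsto (fun k => Vlow k s) atTop (𝓝 (Vhat s))) ∧
    Tendsto (fun k => ⨆ s : S, |Vlow k (s : Fin m → ℝ) - Vhat (s : Fin m → ℝ)|)
      atTop (𝓝 0) := by
  classical
  have hboxsub : boxSet J Phat rhat ⊆ stdSimplex ℝ (Fin J) := fun Q hQ => hQ.1
  have h1γ : 0 < 1 - γ := by linarith
  set B : ℝ := Cbar / (1 - γ) with hBdef
  have hB0 : 0 ≤ B := div_nonneg hCbar0 (le_of_lt h1γ)
  have hBid : Cbar + γ * B = B := by
    rw [hBdef]
    field_simp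
    ring
  obtain ⟨M, hM⟩ := hVhatBd
  -- generic bound on the integrand
  have hbnd : ∀ (V : (Fin m → ℝ) → ℝ) (W : ℝ), (∀ x ∈ S, |V x| ≤ W) →
      ∀ s ∈ S, ∀ a ∈ A, ∀ j, |C s a j + γ * V (g s a j)| ≤ Cbar + γ * W := by
    intro V W hV s hs a ha j
    refine le_trans (abs_add_le _ _) (add_le_add (hCb s hs a ha j) ?_)
    rw [abs_mul, abs_of_nonneg hγ0]
    exact mul_le_mul_of_nonneg_left (hV _ (hgS s hs a ha j)) hγ0
  -- monotonicity of the lower approximations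
  have hmono : ∀ s ∈ S, Monotone fun k => Vlow k s := by
    intro s hs
    apply monotone_nat_of_le_succ
    intro k
    rw [hupd k s hs]
    exact le_max_left _ _
  have hmono' : ∀ x ∈ S, ∀ k l, k ≤ l → Vlow k x ≤ Vlow l x :=
    fun x hx k l h => hmono x hx h
  -- lower bound for the approximations
  have hVlb : ∀ k, ∀ s ∈ S, -B ≤ Vlow k s := by
    intro k
    induction k with
    | zero =>
      intro s hs
      rw [hV0 s hs, hBdef, neg_div]
    | succ k ih =>
      intro s hs
      rw [hupd k s hs]
      exact le_trans (ih s hs) (le_max_left _ _)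
  have hVhatub : ∀ s ∈ S, Vhat s ≤ M := fun s hs => le_of_abs_le (hM s hs)
  -- lower bound for the fixed point
  have hVhatlb : ∀ s ∈ S, -B ≤ Vhat s := by
    have haux : ∀ nn : ℕ, ∀ s ∈ S, -B - γ ^ nn * (M + B) ≤ Vhat s := by
      intro nn
      induction nn with
      | zero =>
        intro s hs
        have h1 : -M ≤ Vhat s := neg_le_of_abs_le (hM s hs)
        rw [pow_zero]
        linarith
      | succ nn ih =>
        intro s hs
        rw [hVhatFix s hs]
        refine bocp_const_le_bellman hA hboxne hboxsub (hbnd Vhat M hM s hs) ?_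
        intro a ha j
        have h1 : -Cbar ≤ C s a j := neg_le_of_abs_le (hCb s hs a ha j)
        have h2 : -B - γ ^ nn * (M + B) ≤ Vhat (g s a j) := ih _ (hgS s hs a ha j)
        have h3 := mul_le_mul_of_nonneg_left h2 hγ0
        rw [pow_succ]
        nlinarith [hBid]
    intro s hs
    have hlim : Tendsto (fun nn : ℕ => -B - γ ^ nn * (M + B)) atTop (𝓝 (-B - 0 * (M + B))) :=
      tendsto_const_nhds.sub ((tendsto_pow_atTop_nhds_zero_of_lt_one hγ0 hγ1).mul_const _)
    rw [zero_mul, sub_zero] at hlim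
    exact le_of_tendsto hlim (Eventually.of_forall fun nn => haux nn s hs)
  -- the approximations stay below the fixed point
  have hVle : ∀ k, ∀ s ∈ S, Vlow k s ≤ Vhat s := by
    intro k
    induction k with
    | zero =>
      intro s hs
      rw [hV0 s hs]
      have h := hVhatlb s hs
      rw [hBdef, ← neg_div] at h
      exact h
    | succ k ih =>
      intro s hs
      rw [hupd k s hs]
      refine max_le (ih s hs) (le_trans (hcut k s hs) ?_)
      have hbk : ∀ x ∈ S, |Vlow k x| ≤ max B M := by
        intro x hx
        rw [abs_le]
        exact ⟨le_trans (neg_le_neg (le_max_left B M)) (hVlb k x hx),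
          le_trans (ih x hx) (le_trans (hVhatub x hx) (le_max_right B M))⟩
      have hbh : ∀ x ∈ S, |Vhat x| ≤ max B M :=
        fun x hx => le_trans (hM x hx) (le_max_right B M)
      calc robustBellman A (boxSet J Phat rhat) C g γ (Vlow k) s
          ≤ robustBellman A (boxSet J Phat rhat) C g γ Vhat s + 0 := by
            refine bocp_bellman_le_bellman hA hboxne hboxsub
              (hbnd (Vlow k) (max B M) hbk s hs) (hbnd Vhat (max B M) hbh s hs) ?_
            intro a ha j
            have h1 := ih _ (hgS s hs a ha j)
            have h2 := mul_le_mul_of_nonneg_left h1 hγ0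
            linarith
        _ = Vhat s := by rw [add_zero, ← hVhatFix s hs]
  -- basic facts about the limit
  have hVinfge : ∀ k, ∀ s ∈ S, Vlow k s ≤ Vinf s := by
    intro k s hs
    refine ge_of_tendsto (hVinf s hs) ?_
    exact eventually_atTop.2 ⟨k, fun l hl => hmono' s hs k l hl⟩
  have hVinfle : ∀ s ∈ S, Vinf s ≤ Vhat s := fun s hs =>
    le_of_tendsto (hVinf s hs) (Eventually.of_forall fun k => hVle k s hs)
  have hVinflb : ∀ s ∈ S, -B ≤ Vinf s := fun s hs =>
    le_trans (hVlb 0 s hs) (hVinfge 0 s hs)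
  set M0 : ℝ := max B M with hM0def
  have habsVinf : ∀ x ∈ S, |Vinf x| ≤ M0 := by
    intro x hx
    rw [abs_le]
    exact ⟨le_trans (neg_le_neg (le_max_left B M)) (hVinflb x hx),
      le_trans (hVinfle x hx) (le_trans (hVhatub x hx) (le_max_right B M))⟩
  have habsVlow : ∀ k, ∀ x ∈ S, |Vlow k x| ≤ M0 := by
    intro k x hx
    rw [abs_le]
    exact ⟨le_trans (neg_le_neg (le_max_left B M)) (hVlb k x hx),
      le_trans (hVle k x hx) (le_trans (hVhatub x hx) (le_max_right B M))⟩
  have habsVhat : ∀ x ∈ S, |Vhat x| ≤ M0 :=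
    fun x hx => le_trans (hM x hx) (le_max_right B M)
  -- continuity of the approximations
  have hVlowCont : ∀ k, ContinuousOn (Vlow k) S := by
    intro k
    induction k with
    | zero => exact continuousOn_const.congr (fun s hs => hV0 s hs)
    | succ k ih =>
      refine (ih.sup (hcutCont k)).congr fun s hs => ?_
      show Vlow (k+1) s = Vlow k s ⊔ cut (k+1) s
      rw [hupd k s hs]
  -- Dini: uniform convergence
  have hunif : ∀ ε > (0:ℝ), ∃ K, ∀ k ≥ K, ∀ x ∈ S, Vinf x - Vlow k x < ε :=
    fun ε hε => bocp_dini hScp hVlowCont hVinfCont hmono' hVinf hε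
  -- uniform continuity data
  have hCvec : ContinuousOn (fun p : (Fin m → ℝ) × (Fin n → ℝ) => fun j => C p.1 p.2 j)
      (S ×ˢ A) := continuousOn_pi.2 hCcont
  have hgvec : ContinuousOn (fun p : (Fin m → ℝ) × (Fin n → ℝ) => fun j => g p.1 p.2 j)
      (S ×ˢ A) := continuousOn_pi.2 hgcont
  have hCuc := Metric.uniformContinuousOn_iff.1
    ((hScp.prod hAcp).uniformContinuousOn_of_continuous hCvec)
  have hguc := Metric.uniformContinuousOn_iff.1
    ((hScp.prod hAcp).uniformContinuousOn_of_continuous hgvec)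
  have hVinfuc := Metric.uniformContinuousOn_iff.1
    (hScp.uniformContinuousOn_of_continuous hVinfCont)
  -- the limit is a supersolution: L Vinf ≤ Vinf on S
  have hLVinf : ∀ s ∈ S, robustBellman A (boxSet J Phat rhat) C g γ Vinf s ≤ Vinf s := by
    intro s hs
    have key : ∀ ε > (0:ℝ),
        robustBellman A (boxSet J Phat rhat) C g γ Vinf s ≤ Vinf s + (2 + 2*γ) * ε := by
      intro ε hε
      obtain ⟨δ3, hδ3, hV3⟩ := hVinfuc ε hε
      obtain ⟨δ2, hδ2, hg2⟩ := hguc δ3 hδ3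
      obtain ⟨δ1, hδ1, hC1⟩ := hCuc ε hε
      obtain ⟨K, hK⟩ := hunif ε hε
      obtain ⟨k, hkK, hks⟩ := hdense s hs (min δ1 (min δ2 δ3))
        (lt_min hδ1 (lt_min hδ2 hδ3)) K
      have hts : sbar k ∈ S := hsbarS k
      have hdist : dist (sbar k) s < min δ1 (min δ2 δ3) := by
        rw [dist_eq_norm]
        exact hks
      have hpair : ∀ a : Fin n → ℝ,
          dist ((s, a) : (Fin m → ℝ) × (Fin n → ℝ)) ((sbar k, a)) = dist s (sbar k) := by
        intro a
        rw [Prod.dist_eq, dist_self]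
        exact max_eq_left dist_nonneg
      have e1 : robustBellman A (boxSet J Phat rhat) C g γ Vinf s ≤
          robustBellman A (boxSet J Phat rhat) C g γ Vinf (sbar k) + (ε + γ * ε) := by
        refine bocp_bellman_le_bellman hA hboxne hboxsub
          (hbnd Vinf M0 habsVinf s hs) (hbnd Vinf M0 habsVinf (sbar k) hts) ?_
        intro a ha j
        have hdsa : dist ((s, a) : (Fin m → ℝ) × (Fin n → ℝ)) ((sbar k, a)) <
            min δ1 (min δ2 δ3) := by
          rw [hpair a, dist_comm]
          exact hdist
        have hC' : dist (fun j => C s a j) (fun j => C (sbar k) a j) < ε :=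
          hC1 _ ⟨hs, ha⟩ _ ⟨hts, ha⟩ (lt_of_lt_of_le hdsa (min_le_left _ _))
        have hCj : |C s a j - C (sbar k) a j| < ε := by
          refine lt_of_le_of_lt ?_ hC'
          have := dist_le_pi_dist (fun j => C s a j) (fun j => C (sbar k) a j) j
          rwa [Real.dist_eq] at this
        have hd23 : dist ((s, a) : (Fin m → ℝ) × (Fin n → ℝ)) ((sbar k, a)) < δ2 :=
          lt_of_lt_of_le hdsa (le_trans (min_le_right δ1 (min δ2 δ3)) (min_le_left δ2 δ3))
        have hg' : dist (fun j => g s a j) (fun j => g (sbar k) a j) < δ3 :=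
          hg2 (s, a) ⟨hs, ha⟩ (sbar k, a) ⟨hts, ha⟩ hd23
        have hgj : dist (g s a j) (g (sbar k) a j) < δ3 :=
          lt_of_le_of_lt (dist_le_pi_dist _ _ j) hg'
        have hVj : |Vinf (g s a j) - Vinf (g (sbar k) a j)| < ε := by
          have := hV3 _ (hgS s hs a ha j) _ (hgS (sbar k) hts a ha j) hgj
          rwa [Real.dist_eq] at this
        have h1 : C s a j ≤ C (sbar k) a j + ε := by
          have := (abs_lt.1 hCj).2
          linarith
        have h2 : Vinf (g s a j) ≤ Vinf (g (sbar k) a j) + ε := by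
          have := (abs_lt.1 hVj).2
          linarith
        have h3 := mul_le_mul_of_nonneg_left h2 hγ0
        rw [mul_add] at h3
        linarith
      have e2 : robustBellman A (boxSet J Phat rhat) C g γ Vinf (sbar k) ≤
          robustBellman A (boxSet J Phat rhat) C g γ (Vlow k) (sbar k) + γ * ε := by
        refine bocp_bellman_le_bellman hA hboxne hboxsub
          (hbnd Vinf M0 habsVinf (sbar k) hts) (hbnd (Vlow k) M0 (habsVlow k) (sbar k) hts) ?_
        intro a ha j
        have h1 : Vinf (g (sbar k) a j) - Vlow k (g (sbar k) a j) < ε :=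
          hK k hkK _ (hgS (sbar k) hts a ha j)
        have h2 : Vinf (g (sbar k) a j) ≤ Vlow k (g (sbar k) a j) + ε := by linarith
        have h3 := mul_le_mul_of_nonneg_left h2 hγ0
        rw [mul_add] at h3
        linarith
      have e3 : robustBellman A (boxSet J Phat rhat) C g γ (Vlow k) (sbar k) ≤
          Vinf (sbar k) := by
        rw [← htight k]
        calc cut (k+1) (sbar k) ≤ Vlow (k+1) (sbar k) := by
              rw [hupd k (sbar k) hts]
              exact le_max_right _ _
          _ ≤ Vinf (sbar k) := hVinfge (k+1) (sbar k) hts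
      have e4 : Vinf (sbar k) ≤ Vinf s + ε := by
        have := hV3 (sbar k) hts s hs
          (lt_of_lt_of_le hdist (le_trans (min_le_right _ _) (min_le_right _ _)))
        rw [Real.dist_eq, abs_lt] at this
        linarith [this.2]
      linarith
    by_contra hcon
    push_neg at hcon
    have hpos : 0 < robustBellman A (boxSet J Phat rhat) C g γ Vinf s - Vinf s := by
      linarith
    have hk := key ((robustBellman A (boxSet J Phat rhat) C g γ Vinf s - Vinf s)
      / (2 * (2 + 2*γ))) (by positivity)
    have hcalc : (2 + 2*γ) * ((robustBellman A (boxSet J Phat rhat) C g γ Vinf s - Vinf s)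
        / (2 * (2 + 2*γ))) = (robustBellman A (boxSet J Phat rhat) C g γ Vinf s - Vinf s) / 2 := by
      field_simp
    rw [hcalc] at hk
    linarith
  -- the fixed point is below the limit
  have hVhatle : ∀ s ∈ S, Vhat s ≤ Vinf s := by
    have hDne : ((fun x => Vhat x - Vinf x) '' S).Nonempty := hS.image _
    have hDbdd : BddAbove ((fun x => Vhat x - Vinf x) '' S) := by
      refine ⟨M0 + M0, ?_⟩
      rintro y ⟨x, hx, rfl⟩
      have h1 := le_of_abs_le (habsVhat x hx)
      have h2 := neg_le_of_abs_le (habsVinf x hx)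
      simp only []
      linarith
    set d := sSup ((fun x => Vhat x - Vinf x) '' S) with hd
    have hdub : ∀ x ∈ S, Vhat x - Vinf x ≤ d :=
      fun x hx => le_csSup hDbdd ⟨x, hx, rfl⟩
    have hkey : ∀ x ∈ S, Vhat x - Vinf x ≤ γ * d := by
      intro x hx
      have e1 : robustBellman A (boxSet J Phat rhat) C g γ Vhat x ≤
          robustBellman A (boxSet J Phat rhat) C g γ Vinf x + γ * d := by
        refine bocp_bellman_le_bellman hA hboxne hboxsub
          (hbnd Vhat M0 habsVhat x hx) (hbnd Vinf M0 habsVinf x hx) ?_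
        intro a ha j
        have h1 := hdub _ (hgS x hx a ha j)
        have h2 : Vhat (g x a j) ≤ Vinf (g x a j) + d := by linarith
        have h3 := mul_le_mul_of_nonneg_left h2 hγ0
        rw [mul_add] at h3
        linarith
      have e2 := hLVinf x hx
      have e3 := hVhatFix x hx
      linarith
    have hdle : d ≤ γ * d := by
      refine csSup_le hDne ?_
      rintro y ⟨x, hx, rfl⟩
      exact hkey x hx
    have hd0 : d ≤ 0 := by nlinarith
    intro s hs
    have h1 := hkey s hs
    have h2 : γ * d ≤ 0 := mul_nonpos_of_nonneg_of_nonpos hγ0 hd0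
    linarith
  have heq : ∀ s ∈ S, Vhat s = Vinf s :=
    fun s hs => le_antisymm (hVhatle s hs) (hVinfle s hs)
  constructor
  · intro s hs
    refine ⟨hmono s hs, ?_⟩
    rw [heq s hs]
    exact hVinf s hs
  · rw [Metric.tendsto_atTop]
    intro ε hε
    obtain ⟨K, hK⟩ := hunif (ε/2) (by linarith)
    refine ⟨K, fun k hk => ?_⟩
    have hub : (⨆ s : S, |Vlow k (s : Fin m → ℝ) - Vhat (s : Fin m → ℝ)|) ≤ ε/2 := by
      refine Real.iSup_le (fun x => ?_) (by linarith)
      have hx := x.2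
      rw [heq _ hx]
      have h1 := hK k hk _ hx
      have h2 := hVinfge k _ hx
      rw [abs_sub_comm, abs_of_nonneg (by linarith)]
      linarith
    have hlb : 0 ≤ (⨆ s : S, |Vlow k (s : Fin m → ℝ) - Vhat (s : Fin m → ℝ)|) :=
      Real.iSup_nonneg fun x => abs_nonneg _
    rw [Real.dist_eq, sub_zero, abs_of_nonneg hlb]
    linarith

end
end
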